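/- arXiv:1305.6573 — 2 statements merged into one kernel-verified Lean document; each statement's English description precedes it below -/
import Mathlib

section
/- Let G be a group, H ≤ G, and α : A → G a homomorphism. Let C = C_G(im α) be the centralizer of the image of α in G, acting on the fixed-point set (G/H)^{im α} by left multiplication. Then there is a bijection between the orbit set (G/H)^{im α}/C and the set of H-conjugacy classes [β] of homomorphisms β : A → H such that β composed with the inclusion H ↪ G is G-conjugate to α. The bijection sends the orbit of gH to the conjugacy class of g⁻¹αg. -/
section
variable {G A : Type*} [Group G] [Group A] (H : Subgroup G) (α : A →* G)

/-- Relation identifying two fixed cosets in the same orbit of the centralizer of `im α`. -/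
def centralizerOrbitRel :
    {x : G ⧸ H // ∀ a : A, (α a) • x = x} → {x : G ⧸ H // ∀ a : A, (α a) • x = x} → Prop :=
  fun x y => ∃ c ∈ Subgroup.centralizer (Set.range α), c • (x : G ⧸ H) = (y : G ⧸ H)

/-- Relation identifying two homomorphisms `A →* H` (whose composite with the inclusion is
conjugate to `α`) that are conjugate by an element of `H`. -/
def hConjRel :
    {β : A →* H // ∃ g : G, ∀ a : A, (β a : G) = g⁻¹ * α a * g} →
    {β : A →* H // ∃ g : G, ∀ a : A, (β a : G) = g⁻¹ * α a * g} → Prop :=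
  fun β β' => ∃ h : H, ∀ a : A, (β' : A →* H) a = h⁻¹ * (β : A →* H) a * h

lemma fixed_iff (g : G) :
    (∀ a : A, (α a) • (QuotientGroup.mk g : G ⧸ H) = QuotientGroup.mk g) ↔
    ∀ a : A, g⁻¹ * α a * g ∈ H := by
  constructor
  · intro h a
    have h1 := h a⁻¹
    rw [MulAction.Quotient.smul_mk, QuotientGroup.eq] at h1
    have h2 : (α a⁻¹ • g)⁻¹ * g = g⁻¹ * α a * g := by
      simp [smul_eq_mul, mul_assoc, mul_inv_rev]
    rwa [h2] at h1
  · intro h a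
    rw [MulAction.Quotient.smul_mk, QuotientGroup.eq]
    have h2 : (α a • g)⁻¹ * g = g⁻¹ * α a⁻¹ * g := by
      simp [smul_eq_mul, mul_assoc, mul_inv_rev]
    rw [h2]
    exact h a⁻¹

def toBeta (g : G) (hg : ∀ a : A, g⁻¹ * α a * g ∈ H) : A →* H where
  toFun a := ⟨g⁻¹ * α a * g, hg a⟩
  map_one' := by ext; simp
  map_mul' a b := by ext; simp [mul_assoc]

@[simp] lemma toBeta_coe (g : G) (hg) (a : A) :
    ((toBeta H α g hg a : H) : G) = g⁻¹ * α a * g := rfl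

lemma toBeta_spec (g : G) (hg) : ∃ g' : G, ∀ a : A,
    ((toBeta H α g hg a : H) : G) = g'⁻¹ * α a * g' := ⟨g, fun _ => rfl⟩

lemma conj_centralizer {x y : G} (h : ∀ a : A, x⁻¹ * α a * x = y⁻¹ * α a * y) :
    y * x⁻¹ ∈ Subgroup.centralizer (Set.range α) := by
  rintro - ⟨a, rfl⟩
  have h1 : α a * (y * x⁻¹) = y * (y⁻¹ * α a * y) * x⁻¹ := by group
  rw [← h a] at h1
  rw [h1]
  group

/-- Key: if `mk (c*g) = mk g'` with `c` in the centralizer, the two induced `β`s are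
`H`-conjugate. -/
lemma key (g g' : G) (hg : ∀ a : A, g⁻¹ * α a * g ∈ H)
    (hg' : ∀ a : A, g'⁻¹ * α a * g' ∈ H)
    (c : G) (hc : c ∈ Subgroup.centralizer (Set.range α))
    (hrel : (QuotientGroup.mk (c * g) : G ⧸ H) = QuotientGroup.mk g') :
    Quot.mk (hConjRel H α) ⟨toBeta H α g hg, toBeta_spec H α g hg⟩ =
    Quot.mk (hConjRel H α) ⟨toBeta H α g' hg', toBeta_spec H α g' hg'⟩ := by
  rw [QuotientGroup.eq] at hrel
  have hmem : g⁻¹ * c⁻¹ * g' ∈ H := by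
    have h1 : (c * g)⁻¹ * g' ∈ H := hrel
    simpa [mul_inv_rev, mul_assoc] using h1
  apply Quot.sound
  refine ⟨⟨g⁻¹ * c⁻¹ * g', hmem⟩, fun a => ?_⟩
  ext
  have hca : α a * c = c * α a := Subgroup.mem_centralizer_iff.mp hc (α a) ⟨a, rfl⟩
  push_cast
  simp only [toBeta_coe, mul_inv_rev, inv_inv]
  have h2 : g'⁻¹ * (c * g) * (g⁻¹ * α a * g) * (g⁻¹ * c⁻¹ * g') =
      g'⁻¹ * (c * α a * c⁻¹) * g' := by group
  rw [h2, ← hca]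
  group

theorem orbits_of_fixed_cosets_equiv_conjugacy_classes :
    ∃ e : Quot (centralizerOrbitRel H α) ≃ Quot (hConjRel H α),
      ∀ (g : G) (hg : ∀ a : A, (α a) • (QuotientGroup.mk g : G ⧸ H) = QuotientGroup.mk g)
        (β : A →* H) (hβ : ∀ a : A, (β a : G) = g⁻¹ * α a * g),
        e (Quot.mk _ ⟨QuotientGroup.mk g, hg⟩) = Quot.mk _ ⟨β, g, hβ⟩ := by
  classical
  set X := {x : G ⧸ H // ∀ a : A, (α a) • x = x} with hX
  set Y := {β : A →* H // ∃ g : G, ∀ a : A, (β a : G) = g⁻¹ * α a * g} with hY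
  have rep : ∀ x : X, ∃ g : G, QuotientGroup.mk g = x.1 := fun x =>
    QuotientGroup.mk_surjective x.1
  let gx : X → G := fun x => (rep x).choose
  have gx_spec : ∀ x : X, QuotientGroup.mk (gx x) = x.1 := fun x => (rep x).choose_spec
  have gx_mem : ∀ x : X, ∀ a : A, (gx x)⁻¹ * α a * (gx x) ∈ H := by
    intro x
    rw [← fixed_iff]
    intro a
    rw [gx_spec x]
    exact x.2 a
  let F0 : X → Quot (hConjRel H α) := fun x =>
    Quot.mk _ ⟨toBeta H α (gx x) (gx_mem x), toBeta_spec H α (gx x) (gx_mem x)⟩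
  have F0_eq : ∀ (x : X) (g : G) (hg : ∀ a : A, g⁻¹ * α a * g ∈ H)
      (c : G), c ∈ Subgroup.centralizer (Set.range α) →
      c • (QuotientGroup.mk g : G ⧸ H) = x.1 →
      F0 x = Quot.mk (hConjRel H α) ⟨toBeta H α g hg, toBeta_spec H α g hg⟩ := by
    intro x g hg c hc h
    refine key H α (gx x) g (gx_mem x) hg c⁻¹ (inv_mem hc) ?_
    have h1 : (QuotientGroup.mk (c * g) : G ⧸ H) = QuotientGroup.mk (gx x) := by
      rw [gx_spec x, ← h]; rfl
    calc (QuotientGroup.mk (c⁻¹ * gx x) : G ⧸ H)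
        = c⁻¹ • (QuotientGroup.mk (gx x) : G ⧸ H) := rfl
      _ = c⁻¹ • (QuotientGroup.mk (c * g) : G ⧸ H) := by rw [h1]
      _ = QuotientGroup.mk g := by
          rw [MulAction.Quotient.smul_mk]
          congr 1
          simp [smul_eq_mul, mul_assoc]
  let F : Quot (centralizerOrbitRel H α) → Quot (hConjRel H α) :=
    Quot.lift F0 (by
      rintro x y ⟨c, hc, hcy⟩
      exact ((F0_eq y (gx x) (gx_mem x) c hc (by rw [gx_spec x]; exact hcy)).trans rfl).symm)
  have gy_fix : ∀ (y : Y), ∀ a : A,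
      (α a) • (QuotientGroup.mk y.2.choose : G ⧸ H) = QuotientGroup.mk y.2.choose := by
    intro y
    rw [fixed_iff]
    intro a
    rw [← y.2.choose_spec a]
    exact (y.1 a).2
  let G0 : Y → Quot (centralizerOrbitRel H α) := fun y =>
    Quot.mk _ ⟨QuotientGroup.mk y.2.choose, gy_fix y⟩
  let Ginv : Quot (hConjRel H α) → Quot (centralizerOrbitRel H α) :=
    Quot.lift G0 (by
      rintro y y' ⟨h, hh⟩
      set g := y.2.choose with hgdef
      set g' := y'.2.choose with hgdef'
      have hspec : ∀ a : A, ((y.1 a : H) : G) = g⁻¹ * α a * g := y.2.choose_spec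
      have hspec' : ∀ a : A, ((y'.1 a : H) : G) = g'⁻¹ * α a * g' := y'.2.choose_spec
      have hconj : ∀ a : A, (g * (h : G))⁻¹ * α a * (g * (h : G)) = g'⁻¹ * α a * g' := by
        intro a
        rw [← hspec' a, hh a]
        push_cast
        rw [hspec a]
        simp [mul_inv_rev, mul_assoc]
      have hc : g' * (g * (h : G))⁻¹ ∈ Subgroup.centralizer (Set.range α) :=
        conj_centralizer α hconj
      apply Quot.sound
      refine ⟨g' * (g * (h : G))⁻¹, hc, ?_⟩
      show (g' * (g * (h : G))⁻¹) • (QuotientGroup.mk g : G ⧸ H) = QuotientGroup.mk g'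
      have hgh : (QuotientGroup.mk g : G ⧸ H) = QuotientGroup.mk (g * (h : G)) := by
        rw [QuotientGroup.eq]
        simpa using h.2
      rw [hgh, MulAction.Quotient.smul_mk]
      congr 1
      simp [smul_eq_mul, mul_assoc])
  have left : ∀ q, Ginv (F q) = q := by
    intro q
    induction q using Quot.ind with
    | _ x =>
      set yy : Y := ⟨toBeta H α (gx x) (gx_mem x), toBeta_spec H α (gx x) (gx_mem x)⟩ with hyy
      have test1 : F (Quot.mk _ x) = F0 x := rfl
      have test2 : F0 x = Quot.mk _ yy := rfl
      have test3 : Ginv (Quot.mk _ yy) = G0 yy := rfl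
      have test4 : G0 yy = Quot.mk _ ⟨QuotientGroup.mk yy.2.choose, gy_fix yy⟩ := rfl
      rw [test1, test2, test3, test4]
      set g2 := yy.2.choose with hg2
      have hspec : ∀ a : A, ((yy.1 a : H) : G) = g2⁻¹ * α a * g2 := yy.2.choose_spec
      have hconj : ∀ a : A, g2⁻¹ * α a * g2 = (gx x)⁻¹ * α a * (gx x) := by
        intro a
        rw [← hspec a]
        rfl
      have hc : gx x * g2⁻¹ ∈ Subgroup.centralizer (Set.range α) :=
        conj_centralizer α hconj
      apply Quot.sound
      refine ⟨gx x * g2⁻¹, hc, ?_⟩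
      show (gx x * g2⁻¹) • (QuotientGroup.mk g2 : G ⧸ H) = x.1
      rw [MulAction.Quotient.smul_mk, ← gx_spec x]
      congr 1
      simp [smul_eq_mul, mul_assoc]
  have right : ∀ q, F (Ginv q) = q := by
    intro q
    induction q using Quot.ind with
    | _ y =>
      set g := y.2.choose with hgdef
      have hspec : ∀ a : A, ((y.1 a : H) : G) = g⁻¹ * α a * g := y.2.choose_spec
      have hgmem : ∀ a : A, g⁻¹ * α a * g ∈ H := by
        intro a; rw [← hspec a]; exact (y.1 a).2
      set xx : X := ⟨QuotientGroup.mk g, gy_fix y⟩ with hxx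
      have test1 : Ginv (Quot.mk _ y) = G0 y := rfl
      have test2 : G0 y = Quot.mk _ xx := rfl
      have test3 : F (Quot.mk _ xx) = F0 xx := rfl
      rw [test1, test2, test3, F0_eq xx g hgmem 1 (one_mem _) (one_smul _ _)]
      have hbeq : toBeta H α g hgmem = y.1 := by
        ext a
        exact (hspec a).symm
      have : (⟨toBeta H α g hgmem, toBeta_spec H α g hgmem⟩ : Y) = y :=
        Subtype.ext hbeq
      rw [this]
  refine ⟨⟨F, Ginv, left, right⟩, ?_⟩
  intro g hg β hβ
  have hgmem : ∀ a : A, g⁻¹ * α a * g ∈ H := (fixed_iff H α g).mp hg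
  show F0 ⟨QuotientGroup.mk g, hg⟩ = Quot.mk _ ⟨β, g, hβ⟩
  rw [F0_eq ⟨QuotientGroup.mk g, hg⟩ g hgmem 1 (one_mem _) (one_smul _ _)]
  have hbeq : toBeta H α g hgmem = β := by
    ext a
    exact (hβ a).symm
  have h3 : (⟨toBeta H α g hgmem, toBeta_spec H α g hgmem⟩ : Y) = ⟨β, g, hβ⟩ :=
    Subtype.ext hbeq
  rw [h3]

end
end

section
/- Let G be a group, H ≤ G, α : A → G a homomorphism, and gH ∈ (G/H)^{im α} a coset fixed by im α. Then the stabilizer of gH under the action of C_G(im α) on (G/H)^{im α} equals g·C_H(im(g⁻¹αg))·g⁻¹. -/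
theorem stabilizer_of_fixed_coset_eq_conj_centralizer {G A : Type*} [Group G] [Group A]
    (H : Subgroup G) (α : A →* G) (g : G)
    (hfix : ∀ a : A, (α a) • (QuotientGroup.mk g : G ⧸ H) = QuotientGroup.mk g) :
    ∀ c : G,
      (c ∈ Subgroup.centralizer (Set.range α) ∧
        c • (QuotientGroup.mk g : G ⧸ H) = QuotientGroup.mk g) ↔
      ∃ x : G, x ∈ H ∧ (∀ a : A, x * (g⁻¹ * α a * g) = (g⁻¹ * α a * g) * x) ∧
        c = g * x * g⁻¹ := by
  intro c
  constructor
  · rintro ⟨hc, hs⟩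
    rw [Subgroup.mem_centralizer_iff] at hc
    refine ⟨g⁻¹ * c * g, ?_, ?_, by group⟩
    · have : ((c * g : G) : G ⧸ H) = (g : G ⧸ H) := by
        simpa [QuotientGroup.mk_mul] using hs
      rw [eq_comm, QuotientGroup.eq] at this
      simpa [mul_assoc] using this
    · intro a
      have h := hc (α a) ⟨a, rfl⟩
      calc g⁻¹ * c * g * (g⁻¹ * α a * g) = g⁻¹ * (c * α a) * g := by group
        _ = g⁻¹ * (α a * c) * g := by rw [h]
        _ = g⁻¹ * α a * g * (g⁻¹ * c * g) := by group
  · rintro ⟨x, hx, hcomm, rfl⟩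
    constructor
    · rw [Subgroup.mem_centralizer_iff]
      rintro _ ⟨a, rfl⟩
      have h := hcomm a
      have : g * (x * (g⁻¹ * α a * g)) * g⁻¹ = g * ((g⁻¹ * α a * g) * x) * g⁻¹ := by
        rw [h]
      calc α a * (g * x * g⁻¹) = g * ((g⁻¹ * α a * g) * x) * g⁻¹ := by group
        _ = g * (x * (g⁻¹ * α a * g)) * g⁻¹ := by rw [h]
        _ = g * x * g⁻¹ * α a := by group
    · have : ((g * x * g⁻¹ * g : G) : G ⧸ H) = (g : G ⧸ H) := by
        rw [QuotientGroup.eq]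
        simpa [mul_assoc] using H.inv_mem hx
      simpa [QuotientGroup.mk_mul, mul_assoc] using this
end
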